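/- arXiv:2112.01106 — 2 statements merged into one kernel-verified Lean document; each statement's English description precedes it below -/
import Mathlib

section
/- Let b > 1 be an integer, a a positive integer, and i ≥ 2 an integer. Writing a^{(i)}_j = r_b(i) + a·r_b(j-1), the sum over all tuples (u_2, …, u_i) ∈ R(b,i) of ∑_{j=2}^i u_j·a^{(i)}_j equals ∑_{j=2}^i ((b^i + b^{i−(j−1)})/2)·a^{(i)}_j. -/
/-- The repunit number in base `b` of length `ℓ`: `r_b(ℓ) = ∑_{j=0}^{ℓ-1} b^j`. -/
def repunit (b ℓ : ℕ) : ℕ := ∑ j ∈ Finset.range ℓ, b ^ j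

/-- `aseq b a i j = a^{(i)}_j = r_b(i) + a·r_b(j-1)`. -/
def aseq (b a i j : ℕ) : ℕ := repunit b i + a * repunit b (j - 1)

/-- The set `R(b,i)` of tuples `(u_2, …, u_i) ∈ ℕ^{i-1}` (a tuple with `m = i-1` entries,
where coordinate `j : Fin m` represents `u_{j+2}`) such that every entry is `≤ b`, and
whenever an entry equals `b`, all previous entries are `0`. -/
def RFin (b m : ℕ) : Finset (Fin m → ℕ) :=
  (Fintype.piFinset fun _ => Finset.range (b + 1)).filter
    (fun u => ∀ j, u j = b → ∀ k, k < j → u k = 0)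

lemma mem_RFin {b m : ℕ} {u : Fin m → ℕ} :
    u ∈ RFin b m ↔ (∀ j, u j ≤ b) ∧ ∀ j, u j = b → ∀ k, k < j → u k = 0 := by
  simp [RFin, Fintype.mem_piFinset, Nat.lt_succ_iff]

lemma RFin_succ (b m : ℕ) :
    RFin b (m+1) =
      ((RFin b m ×ˢ Finset.range b).image fun p => Fin.snoc p.1 p.2) ∪
        {Fin.snoc (fun _ => 0) b} := by
  ext u
  simp only [Finset.mem_union, Finset.mem_image, Finset.mem_product, Finset.mem_range,
    Finset.mem_singleton, mem_RFin, Prod.exists]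
  constructor
  · rintro ⟨h1, h2⟩
    by_cases hx : u (Fin.last m) = b
    · right
      funext j
      cases j using Fin.lastCases with
      | last => simp [hx]
      | cast j => simp [h2 _ hx _ (Fin.castSucc_lt_last j)]
    · left
      refine ⟨Fin.init u, u (Fin.last m),
        ⟨⟨fun j => h1 _, fun j hj k hk => h2 _ hj _ ?_⟩, lt_of_le_of_ne (h1 _) hx⟩,
        Fin.snoc_init_self u⟩
      exact Fin.castSucc_lt_castSucc_iff.mpr hk
  · rintro (⟨v, x, ⟨⟨hv1, hv2⟩, hx⟩, rfl⟩ | rfl)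
    · refine ⟨fun j => ?_, fun j hj k hk => ?_⟩
      · cases j using Fin.lastCases with
        | last => simpa using le_of_lt hx
        | cast j => simpa using hv1 j
      · cases j using Fin.lastCases with
        | last => simp at hj; omega
        | cast j =>
          cases k using Fin.lastCases with
          | last => exact absurd hk (by simp [Fin.lt_def])
          | cast k =>
            simp only [Fin.snoc_castSucc] at hj ⊢
            exact hv2 _ hj _ (Fin.castSucc_lt_castSucc_iff.mp hk)
    · refine ⟨fun j => ?_, fun j hj k hk => ?_⟩
      · cases j using Fin.lastCases with
        | last => simp
        | cast j => simp
      · cases k using Fin.lastCases with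
        | last =>
          cases j using Fin.lastCases with
          | last => exact absurd hk (lt_irrefl _)
          | cast j => exact absurd hk (by simp [Fin.lt_def])
        | cast k => simp

lemma sum_RFin_succ (b m : ℕ) (F : (Fin (m+1) → ℕ) → ℕ) :
    ∑ u ∈ RFin b (m+1), F u
      = (∑ v ∈ RFin b m, ∑ x ∈ Finset.range b, F (Fin.snoc v x)) + F (Fin.snoc (fun _ => 0) b) := by
  rw [RFin_succ b m, Finset.sum_union, Finset.sum_image, Finset.sum_product,
    Finset.sum_singleton]
  · rintro ⟨v, x⟩ hv ⟨w, y⟩ hw h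
    have h1 : x = y := by
      have := congrFun h (Fin.last m); simpa using this
    have h2 : v = w := by
      funext j
      have := congrFun h (Fin.castSucc j); simpa using this
    simp [h1, h2]
  · rw [Finset.disjoint_right]
    intro u hu
    simp only [Finset.mem_singleton] at hu
    subst hu
    simp only [Finset.mem_image, Finset.mem_product, Finset.mem_range, Prod.exists, not_exists]
    rintro v x ⟨⟨-, hx⟩, h⟩
    have := congrFun h (Fin.last m)
    simp at this; omega

lemma repunit_succ (b m : ℕ) : repunit b (m+1) = b * repunit b m + 1 := by
  simp [repunit, Finset.sum_range_succ', pow_succ, Finset.mul_sum, mul_comm]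

lemma repunit_succ' (b m : ℕ) : repunit b (m+1) = repunit b m + b ^ m := by
  simp [repunit, Finset.sum_range_succ]

lemma card_RFin (b : ℕ) : ∀ m, (RFin b m).card = b ^ m + repunit b m := by
  intro m
  induction m with
  | zero =>
    simp [repunit]
    rw [Finset.card_eq_one]
    exact ⟨fun j => j.elim0, by ext u; simp [mem_RFin]; funext j; exact j.elim0⟩
  | succ m ih =>
    have := sum_RFin_succ b m (fun _ => 1)
    simp only [Finset.sum_const, smul_eq_mul, mul_one, Finset.card_range] at this
    rw [this, ih, repunit_succ]
    ring

lemma two_mul_col (b : ℕ) (hb : 0 < b) :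
    ∀ m (k : Fin m), 2 * ∑ u ∈ RFin b m, u k = b ^ (m+1) + b ^ (m - (k : ℕ)) := by
  intro m
  induction m with
  | zero => exact fun k => k.elim0
  | succ m ih =>
    intro k
    rw [sum_RFin_succ b m (fun u => u k)]
    cases k using Fin.lastCases with
    | last =>
      simp only [Fin.snoc_last, Fin.val_last, Nat.add_sub_cancel_left]
      have hg : (∑ x ∈ Finset.range b, x) * 2 = b * (b - 1) := Finset.sum_range_id_mul_two b
      have hb1 : b * (b - 1) + b = b ^ 2 := by
        cases b with
        | zero => simp
        | succ n => simp only [Nat.succ_sub_one]; ring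
      have hs : 2 * (∑ x ∈ Finset.range b, x) + b = b ^ 2 := by
        rw [show 2 * (∑ x ∈ Finset.range b, x) = b * (b - 1) by rw [mul_comm]; exact hg, hb1]
      have hr : b * repunit b m + 1 = repunit b m + b ^ m := by
        have := repunit_succ b m
        have := repunit_succ' b m
        omega
      rw [Finset.sum_const]
      rw [card_RFin b m]
      set s := ∑ x ∈ Finset.range b, x with hsdef
      set r := repunit b m with hrdef
      have key : 2 * ((b ^ m + r) * s + b) = b ^ (m + 1 + 1) + b ^ (m + 1 - m) := by
        have hmm : m + 1 - m = 1 := by omega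
        rw [hmm, pow_one]
        zify at hs hr ⊢
        linear_combination (b ^ m + (r:ℤ)) * hs + (b:ℤ) * hr
      simpa [smul_eq_mul, mul_comm] using key
    | cast k =>
      simp only [Fin.snoc_castSucc, Fin.coe_castSucc, Finset.sum_const, Finset.card_range,
        smul_eq_mul, add_zero]
      rw [← Finset.mul_sum,
        show 2 * (b * ∑ u ∈ RFin b m, u k) = b * (2 * ∑ u ∈ RFin b m, u k) by ring, ih k]
      have h1 : m + 1 - (k : ℕ) = (m - (k : ℕ)) + 1 := by omega
      rw [h1]
      ring

lemma main_aux (b a m : ℕ) (hb : 1 < b) :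
    ∑ u ∈ RFin b m, (∑ j : Fin m, u j * aseq b a (m+1) (j.val + 2))
      = ∑ j ∈ Finset.Icc 2 (m+1), ((b ^ (m+1) + b ^ (m+1 - (j - 1))) / 2) * aseq b a (m+1) j := by
  rw [Finset.sum_comm]
  have hcol : ∀ j : Fin m, (∑ u ∈ RFin b m, u j) = (b ^ (m+1) + b ^ (m - (j : ℕ))) / 2 := by
    intro j
    exact Nat.eq_div_of_mul_eq_left (by norm_num)
      (by rw [mul_comm]; exact two_mul_col b (by omega) m j)
  calc ∑ j : Fin m, ∑ u ∈ RFin b m, u j * aseq b a (m+1) (j.val + 2)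
      = ∑ j : Fin m, ((b ^ (m+1) + b ^ (m - (j : ℕ))) / 2) * aseq b a (m+1) (j.val + 2) := by
        refine Finset.sum_congr rfl fun j _ => ?_
        rw [← Finset.sum_mul, hcol j]
    _ = ∑ k ∈ Finset.range m, ((b ^ (m+1) + b ^ (m - k)) / 2) * aseq b a (m+1) (k + 2) :=
        Fin.sum_univ_eq_sum_range (fun k => ((b ^ (m+1) + b ^ (m - k)) / 2) * aseq b a (m+1) (k + 2)) m
    _ = ∑ j ∈ Finset.Icc 2 (m+1), ((b ^ (m+1) + b ^ (m+1 - (j - 1))) / 2) * aseq b a (m+1) j := by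
        rw [← Finset.Ico_add_one_right_eq_Icc, Finset.sum_Ico_eq_sum_range]
        refine Finset.sum_congr (by congr 1) fun k hk => ?_
        rw [show m + 1 - (2 + k - 1) = m - k by omega, show 2 + k = k + 2 by ring]

/-- Each quantity `b^i + b^(i-(j-1))` is even, so the natural-number divisions by `2`
below are exact. -/
theorem stmt_13 (b a : ℕ) (hb : 1 < b) (ha : 0 < a) :
    ∀ i, 2 ≤ i →
      ∑ u ∈ RFin b (i - 1), (∑ j : Fin (i - 1), u j * aseq b a i (j.val + 2))
        = ∑ j ∈ Finset.Icc 2 i, ((b ^ i + b ^ (i - (j - 1))) / 2) * aseq b a i j := by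
  intro i hi
  have e : i - 1 + 1 = i := by omega
  have h := main_aux b a (i - 1) hb
  rw [e] at h
  exact h
end

section
/- Let b > 1 be an integer, a a positive integer, and i ≥ 2 an integer with gcd(r_b(i), a) = 1. Then the sum of all elements of the Apéry set Ap(S_a(b,i), r_b(i)) equals ∑_{j=2}^i ((b^i + b^{i−(j−1)})/2)·a^{(i)}_j, where a^{(i)}_j = r_b(i) + a·r_b(j-1). -/
/-- The additive submonoid `S_a(b,i)` of `ℕ` generated by `{a^{(i)}_j : j ≥ 1}`. -/
def grep (b a i : ℕ) : AddSubmonoid ℕ :=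
  AddSubmonoid.closure {x | ∃ j, 1 ≤ j ∧ x = aseq b a i j}

/-- The Apéry set of `S` with respect to `s`: elements `ω ∈ S` with `ω - s ∉ S`
(i.e. there is no `t ∈ S` with `ω = t + s`). -/
def Apery (S : AddSubmonoid ℕ) (s : ℕ) : Set ℕ :=
  {ω | ω ∈ S ∧ ¬ ∃ t ∈ S, ω = t + s}

/- auxiliary development -/
section Aux

lemma ru_zero (b : ℕ) : repunit b 0 = 0 := by simp [repunit]

lemma ru_succ (b k : ℕ) : repunit b (k+1) = b * repunit b k + 1 := by
  unfold repunit
  rw [Finset.sum_range_succ' (fun j => b ^ j)]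
  simp [pow_succ, Finset.mul_sum, mul_comm]

lemma ru_one (b : ℕ) : repunit b 1 = 1 := by simp [ru_succ, ru_zero]

lemma ru_pos (b k : ℕ) (hk : 0 < k) : 0 < repunit b k := by
  obtain ⟨k', rfl⟩ := Nat.exists_eq_add_of_lt hk
  rw [show 0 + k' + 1 = k' + 1 by omega, ru_succ]; omega

lemma ru_mono (b : ℕ) {j k : ℕ} (h : j ≤ k) : repunit b j ≤ repunit b k := by
  exact Finset.sum_le_sum_of_subset (Finset.range_subset_range.2 h)

lemma ru_lt_succ (b : ℕ) (hb : 1 < b) (k : ℕ) : repunit b k < repunit b (k+1) := by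
  rw [ru_succ]
  have : repunit b k ≤ b * repunit b k := Nat.le_mul_of_pos_left _ (by omega)
  omega

lemma ru_strict (b : ℕ) (hb : 1 < b) {j k : ℕ} (h : j < k) : repunit b j < repunit b k := by
  calc repunit b j < repunit b (j+1) := ru_lt_succ b hb j
    _ ≤ repunit b k := ru_mono b h

lemma ru_mul (b : ℕ) (hb : 1 < b) (k : ℕ) : (b - 1) * repunit b k + 1 = b ^ k := by
  obtain ⟨c, rfl⟩ : ∃ c, b = c + 1 := ⟨b - 1, by omega⟩
  simp only [Nat.add_sub_cancel]
  induction k with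
  | zero => simp [ru_zero]
  | succ k ih =>
    rw [ru_succ, pow_succ, ← ih]
    ring

lemma ru_add (b n s : ℕ) : repunit b (n + s) = b ^ s * repunit b n + repunit b s := by
  induction s with
  | zero => simp [ru_zero]
  | succ s ih =>
    rw [show n + (s+1) = (n+s)+1 by omega, ru_succ, ih, ru_succ, pow_succ]
    ring

def sig (b : ℕ) : ℕ → ℕ → ℕ
| 0, _ => 0
| (k+1), m => m / repunit b (k+1) + sig b k (m % repunit b (k+1))

lemma sig_zero (b k : ℕ) : sig b k 0 = 0 := by
  induction k with
  | zero => rfl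
  | succ k ih => simp [sig, ih]

lemma sig_mul_add (b : ℕ) (hb : 1 < b) {k c s : ℕ} (hs : s < repunit b (k+1)) :
    sig b (k+1) (repunit b (k+1) * c + s) = c + sig b k s := by
  have hR : 0 < repunit b (k+1) := ru_pos b _ (by omega)
  simp [sig, Nat.mul_add_div hR, Nat.mul_add_mod, Nat.div_eq_of_lt hs, Nat.mod_eq_of_lt hs]

lemma sig_of_lt_coin (b : ℕ) (hb : 1 < b) {k m : ℕ} (hm : m < repunit b (k+1)) :
    sig b (k+1) m = sig b k m := by
  simp [sig, Nat.div_eq_of_lt hm, Nat.mod_eq_of_lt hm]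

lemma sig_eq_low (b : ℕ) (hb : 1 < b) : ∀ k {j m}, j ≤ k → m < repunit b (j+1) → sig b k m = sig b j m := by
  intro k
  induction k with
  | zero => intro j m hj _; interval_cases j; rfl
  | succ k ih =>
    intro j m hj hm
    rcases Nat.eq_or_lt_of_le hj with rfl | hlt
    · rfl
    · have hj' : j ≤ k := by omega
      have hm' : m < repunit b (k+1) := lt_of_lt_of_le hm (ru_mono b (by omega))
      rw [sig_of_lt_coin b hb hm', ih hj' hm]

lemma sig_top (b : ℕ) (hb : 1 < b) {k : ℕ} (hk : 1 ≤ k) :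
    sig b k (b * repunit b k) = b := by
  obtain ⟨k', rfl⟩ := Nat.exists_eq_add_of_le hk
  rw [show 1 + k' = k' + 1 by omega]
  have hR : 0 < repunit b (k'+1) := ru_pos b _ (by omega)
  have : b * repunit b (k'+1) = repunit b (k'+1) * b + 0 := by ring
  rw [this, sig_mul_add b hb hR, sig_zero]
  omega

lemma sig_pred_le (b : ℕ) (hb : 1 < b) (k : ℕ) :
    sig b k (repunit b (k+1) - 1) ≤ b := by
  cases k with
  | zero => rw [ru_one]; simp [sig]
  | succ k =>
    have : repunit b (k+1+1) - 1 = b * repunit b (k+1) := by rw [ru_succ]; omega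
    rw [this, sig_top b hb (by omega)]

-- Lemma D
lemma sig_succ_le (b : ℕ) (hb : 1 < b) : ∀ k x, sig b k x ≤ sig b k (x + 1) + (b - 1) := by
  intro k
  induction k with
  | zero => intro x; simp [sig]
  | succ k ih =>
    intro x
    set R := repunit b (k+1) with hRdef
    have hR : 0 < R := ru_pos b _ (by omega)
    obtain ⟨q, s, hqs, hsR⟩ : ∃ q s, x = R * q + s ∧ s < R :=
      ⟨x/R, x%R, (Nat.div_add_mod x R).symm, Nat.mod_lt _ hR⟩
    have hmul : R * (q + 1) = R * q + R := by ring
    subst hqs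
    by_cases hcase : s + 1 < R
    · have h1 : R * q + s + 1 = R * q + (s + 1) := by omega
      rw [h1, sig_mul_add b hb hcase, sig_mul_add b hb hsR]
      have := ih s
      omega
    · have h1 : R * q + s + 1 = R * (q + 1) + 0 := by omega
      rw [h1, sig_mul_add b hb hR, sig_zero, sig_mul_add b hb hsR]
      have h2 : s = repunit b (k+1) - 1 := by omega
      have := sig_pred_le b hb k
      rw [h2]
      omega

-- Lemma K
lemma sig_shift_le (b : ℕ) (hb : 1 < b) :
    ∀ k t y z, 1 ≤ t → t ≤ k → y < repunit b t → z + repunit b t = y + repunit b (k+1) →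
      sig b k y ≤ sig b k z := by
  intro k
  induction k with
  | zero => intro t y z h1 h2; omega
  | succ k ih =>
    intro t y z h1 h2 hy hz
    set R := repunit b (k+1) with hRdef
    have hR : 0 < R := ru_pos b _ (by omega)
    have htR : repunit b t ≤ R := ru_mono b (by omega)
    have hRsucc : repunit b (k+1+1) = b * R + 1 := ru_succ b (k+1)
    have hbR : R * (b - 1) + R = b * R := by
      have h' : b - 1 + 1 = b := by omega
      calc R * (b - 1) + R = R * ((b - 1) + 1) := by ring
        _ = b * R := by rw [h']; ring
    by_cases hd : y + 1 = repunit b t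
    · have hzv : z = b * R := by omega
      rw [hzv, sig_top b hb (by omega)]
      have hylt : y < repunit b ((t-1)+1) := by
        rw [show t - 1 + 1 = t by omega]; exact hy
      rw [sig_eq_low b hb (k+1) (by omega) hylt]
      calc sig b (t-1) y = sig b (t-1) (repunit b (t-1+1) - 1) := by
            rw [show t - 1 + 1 = t by omega]; congr 1; omega
        _ ≤ b := sig_pred_le b hb (t-1)
    · have hd1 : y + 1 < repunit b t := by omega
      have hzs : z = R * (b - 1) + (y + 1 + (R - repunit b t)) := by omega
      have hslt : y + 1 + (R - repunit b t) < R := by omega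
      rw [hzs, sig_mul_add b hb hslt]
      have hylt : sig b (k+1) y = sig b k y := by
        apply sig_eq_low b hb (k+1) (by omega)
        calc y < repunit b t := hy
          _ ≤ repunit b (k+1) := htR
      rw [hylt]
      have hD := sig_succ_le b hb k y
      rcases Nat.eq_or_lt_of_le h2 with heq | hlt
      · have hTT : repunit b t = repunit b (k+1) := by rw [heq]
        have hs0 : y + 1 + (R - repunit b t) = y + 1 := by omega
        rw [hs0]; omega
      · have ht' : t ≤ k := by omega
        have hIH := ih t (y+1) (y + 1 + (R - repunit b t)) h1 ht' hd1 (by omega)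
        omega

-- Lemma A
lemma sig_add_coin_le (b : ℕ) (hb : 1 < b) :
    ∀ k t x, 1 ≤ t → t ≤ k → sig b k (x + repunit b t) ≤ sig b k x + 1 := by
  intro k
  induction k with
  | zero => intro t x h1 h2; omega
  | succ k ih =>
    intro t x h1 h2
    set R := repunit b (k+1) with hRdef
    have hR : 0 < R := ru_pos b _ (by omega)
    obtain ⟨q, s, hqs, hsR⟩ : ∃ q s, x = R * q + s ∧ s < R :=
      ⟨x/R, x%R, (Nat.div_add_mod x R).symm, Nat.mod_lt _ hR⟩
    have hmul : R * (q + 1) = R * q + R := by ring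
    subst hqs
    rcases Nat.eq_or_lt_of_le h2 with heq | hlt
    · have hT : repunit b t = R := by rw [heq]
      have h1' : R * q + s + repunit b t = R * (q + 1) + s := by omega
      rw [h1', sig_mul_add b hb hsR, sig_mul_add b hb hsR]
      omega
    · have ht' : t ≤ k := by omega
      have htR : repunit b t ≤ repunit b k := ru_mono b ht'
      have hkR : repunit b k < R := ru_lt_succ b hb k
      by_cases hcase : s + repunit b t < R
      · have h1' : R * q + s + repunit b t = R * q + (s + repunit b t) := by omega
        rw [h1', sig_mul_add b hb hcase, sig_mul_add b hb hsR]
        have := ih t s h1 ht'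
        omega
      · have hy : s + repunit b t - R < repunit b t := by omega
        have h1' : R * q + s + repunit b t = R * (q + 1) + (s + repunit b t - R) := by omega
        have hylt : s + repunit b t - R < R := by omega
        rw [h1', sig_mul_add b hb hylt, sig_mul_add b hb hsR]
        have hK := sig_shift_le b hb k t (s + repunit b t - R) s h1 ht' hy (by omega)
        omega

-- defs duplicated? no

-- star, inner form
lemma star0 (b n : ℕ) (hb : 1 < b) (hn : 2 ≤ n) :
    ∀ t m, 1 ≤ t → m < repunit b n →
      sig b (n-1) ((m + repunit b t) % repunit b n)
        ≤ sig b (n-1) m + 1 + (m + repunit b t) / repunit b n := by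
  intro t
  induction t using Nat.strong_induction_on with
  | _ t ihs =>
    intro m h1 hm
    set r := repunit b n with hrdef
    have hr : 0 < r := ru_pos b _ (by omega)
    have hn1 : n - 1 + 1 = n := by omega
    rcases lt_trichotomy t n with hlt | heq | hgt
    · -- t ≤ n - 1
      have ht' : t ≤ n - 1 := by omega
      have htr : repunit b t ≤ repunit b (n-1) := ru_mono b ht'
      have hn1r : repunit b (n-1) < r := by
        rw [hrdef, ← hn1]; exact ru_lt_succ b hb (n-1)
      by_cases hcase : m + repunit b t < r
      · rw [Nat.mod_eq_of_lt hcase, Nat.div_eq_of_lt hcase]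
        have := sig_add_coin_le b hb (n-1) t m h1 ht'
        omega
      · have h2r : m + repunit b t < 2 * r := by omega
        have hmod : (m + repunit b t) % r = m + repunit b t - r := by
          rw [Nat.mod_eq_sub_mod (by omega), Nat.mod_eq_of_lt (by omega)]
        have hdiv : 1 ≤ (m + repunit b t) / r := Nat.one_le_div_iff hr |>.2 (by omega)
        rw [hmod]
        have hy : m + repunit b t - r < repunit b t := by omega
        have hK := sig_shift_le b hb (n-1) t (m + repunit b t - r) m h1 ht' hy (by rw [hn1]; omega)
        omega
    · -- t = n
      subst heq
      rw [← hrdef]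
      have hmod : (m + r) % r = m := by
        rw [Nat.add_mod_right, Nat.mod_eq_of_lt hm]
      rw [hmod]
      exact le_trans (Nat.le_succ _) (Nat.le_add_right _ _)
    · -- t > n
      obtain ⟨s, rfl⟩ : ∃ s, t = n + s := ⟨t - n, by omega⟩
      have hs1 : 1 ≤ s := by omega
      have hadd : repunit b (n + s) = b ^ s * r + repunit b s := ru_add b n s
      have harr : m + repunit b (n+s) = (m + repunit b s) + r * b ^ s := by rw [hadd]; ring
      have hmod : (m + repunit b (n+s)) % r = (m + repunit b s) % r := by
        rw [harr, Nat.add_mul_mod_self_left]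
      have hdiv : (m + repunit b (n+s)) / r = (m + repunit b s) / r + b ^ s := by
        rw [harr, Nat.add_mul_div_left _ _ hr]
      have := ihs s (by omega) m hs1 hm
      rw [hmod, hdiv]
      omega

lemma star (b n : ℕ) (hb : 1 < b) (hn : 2 ≤ n) (t M : ℕ) (h1 : 1 ≤ t) :
    sig b (n-1) ((M + repunit b t) % repunit b n) + M / repunit b n
      ≤ sig b (n-1) (M % repunit b n) + 1 + (M + repunit b t) / repunit b n := by
  set r := repunit b n with hrdef
  have hr : 0 < r := ru_pos b _ (by omega)
  obtain ⟨Q, m, hqm, hmr⟩ : ∃ Q m, M = r * Q + m ∧ m < r :=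
    ⟨M/r, M%r, (Nat.div_add_mod M r).symm, Nat.mod_lt _ hr⟩
  subst hqm
  have e1 : (r * Q + m + repunit b t) % r = (m + repunit b t) % r := by
    rw [show r * Q + m + repunit b t = m + repunit b t + r * Q by ring, Nat.add_mul_mod_self_left]
  have e2 : (r * Q + m + repunit b t) / r = Q + (m + repunit b t) / r := by
    rw [show r * Q + m + repunit b t = r * Q + (m + repunit b t) by ring, Nat.mul_add_div hr]
  have e3 : (r * Q + m) % r = m := by rw [Nat.mul_add_mod, Nat.mod_eq_of_lt hmr]
  have e4 : (r * Q + m) / r = Q := by rw [Nat.mul_add_div hr, Nat.div_eq_of_lt hmr]; omega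
  rw [e1, e2, e3, e4]
  have hs0 := star0 b n hb hn t m h1 hmr
  rw [← hrdef] at hs0
  omega

-- lower bound decomposition for members of the semigroup
lemma mem_decomp (b a n : ℕ) (hb : 1 < b) (ha : 0 < a) (hn : 2 ≤ n) {x : ℕ}
    (hx : x ∈ grep b a n) :
    ∃ L M : ℕ, x = L * repunit b n + a * M ∧
      sig b (n-1) (M % repunit b n) ≤ L + a * (M / repunit b n) := by
  set r := repunit b n with hrdef
  have hr : 0 < r := ru_pos b _ (by omega)
  obtain ⟨l, hl, hsum⟩ := AddSubmonoid.exists_multiset_of_mem_closure hx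
  clear hx
  induction l using Multiset.induction generalizing x with
  | empty =>
    refine ⟨0, 0, by simp [← hsum], ?_⟩
    simp [Nat.zero_mod, sig_zero]
  | cons g l ih =>
    obtain ⟨L, M, hxe, hineq⟩ := ih (fun y hy => hl y (Multiset.mem_cons_of_mem hy)) rfl
    obtain ⟨j, hj1, hjg⟩ := hl g (Multiset.mem_cons_self g l)
    subst hsum
    rw [Multiset.sum_cons, hjg, hxe]
    unfold aseq
    rcases Nat.eq_or_lt_of_le hj1 with rfl | hj2
    · -- j = 1 : generator is r itself
      refine ⟨L + 1, M, ?_, by omega⟩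
      rw [ru_zero, ← hrdef]; ring
    · -- j ≥ 2
      set t := j - 1 with htdef
      have ht1 : 1 ≤ t := by omega
      refine ⟨L + 1, M + repunit b t, ?_, ?_⟩
      · rw [← hrdef]; ring
      · have hstar := star b n hb hn t M ht1
        have hQ : M / r ≤ (M + repunit b t) / r := Nat.div_le_div_right (by omega)
        obtain ⟨d, hd⟩ : ∃ d, (M + repunit b t) / r = M / r + d := ⟨_, (Nat.add_sub_cancel' hQ).symm⟩
        have had : d ≤ a * d := Nat.le_mul_of_pos_left d ha
        have hma : a * ((M + repunit b t) / r) = a * (M / r) + a * d := by rw [hd]; ring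
        rw [← hrdef] at hstar
        omega

-- membership of candidate Apery elements
lemma w_mem (b a n : ℕ) (hb : 1 < b) :
    ∀ k m, m < repunit b (k+1) →
      sig b k m * repunit b n + a * m ∈ grep b a n := by
  intro k
  induction k with
  | zero =>
    intro m hm
    rw [ru_one] at hm
    interval_cases m
    simp [sig_zero]
  | succ k ih =>
    intro m hm
    set R := repunit b (k+1) with hRdef
    have hR : 0 < R := ru_pos b _ (by omega)
    obtain ⟨q, s, hqs, hsR⟩ : ∃ q s, m = R * q + s ∧ s < R :=
      ⟨m/R, m%R, (Nat.div_add_mod m R).symm, Nat.mod_lt _ hR⟩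
    subst hqs
    rw [sig_mul_add b hb hsR]
    have hgen : (repunit b n + a * R) ∈ grep b a n := by
      apply AddSubmonoid.subset_closure
      exact ⟨k + 2, by omega, by simp [aseq, hRdef]⟩
    have hq : q * (repunit b n + a * R) ∈ grep b a n := by
      have := AddSubmonoid.nsmul_mem (grep b a n) hgen q
      simpa [nsmul_eq_mul] using this
    have hrec := ih s hsR
    have := AddSubmonoid.add_mem _ hq hrec
    have heq : q * (repunit b n + a * R) + (sig b k s * repunit b n + a * s)
        = (q + sig b k s) * repunit b n + a * (R * q + s) := by ring
    rwa [heq] at this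

lemma r_mem_grep (b a n : ℕ) : repunit b n ∈ grep b a n := by
  apply AddSubmonoid.subset_closure
  exact ⟨1, le_refl 1, by simp [aseq, ru_zero]⟩

-- a·m₁ ≡ a·m₂ mod r  from equality of the explicit forms
lemma cong_extract (b a n : ℕ) (hgcd : Nat.gcd (repunit b n) a = 1)
    {m M A B : ℕ} (hm : m < repunit b n)
    (heq : (a * m + A * repunit b n) = (a * M + B * repunit b n)) :
    M % repunit b n = m := by
  have h1 : (a * m) % repunit b n = (a * M) % repunit b n := by
    have e1 := Nat.add_mul_mod_self_right (a * m) A (repunit b n)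
    have e2 := Nat.add_mul_mod_self_right (a * M) B (repunit b n)
    rw [← e1, ← e2, heq]
  have hc : m ≡ M [MOD repunit b n] :=
    Nat.ModEq.cancel_left_of_coprime hgcd h1
  have := hc.symm
  unfold Nat.ModEq at this
  rw [Nat.mod_eq_of_lt hm] at this
  exact this

lemma apery_eq (b a n : ℕ) (hb : 1 < b) (ha : 0 < a) (hn : 2 ≤ n)
    (hgcd : Nat.gcd (repunit b n) a = 1) :
    Apery (grep b a n) (repunit b n)
      = ↑((Finset.range (repunit b n)).image
           (fun m => sig b (n-1) m * repunit b n + a * m)) := by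
  have hr : 0 < repunit b n := ru_pos b _ (by omega)
  have hn1 : n - 1 + 1 = n := by omega
  ext x
  simp only [Finset.coe_image, Finset.coe_range, Set.mem_image, Set.mem_Iio, Apery,
    Set.mem_setOf_eq]
  constructor
  · rintro ⟨hxS, hnex⟩
    obtain ⟨L, M, hxe, hineq⟩ := mem_decomp b a n hb ha hn hxS
    set r := repunit b n with hrdef
    obtain ⟨k, m, hkm, hmr⟩ : ∃ k m, M = r * k + m ∧ m < r :=
      ⟨M/r, M%r, (Nat.div_add_mod M r).symm, Nat.mod_lt _ hr⟩
    have hMmod : M % r = m := by rw [hkm, Nat.mul_add_mod, Nat.mod_eq_of_lt hmr]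
    have hMdiv : M / r = k := by rw [hkm, Nat.mul_add_div hr, Nat.div_eq_of_lt hmr]; omega
    rw [hMmod, hMdiv] at hineq
    refine ⟨m, hmr, ?_⟩
    -- x = W m + c * r with c = L + a*k - sig m
    have hx2 : x = (sig b (n-1) m * r + a * m) + (L + a * k - sig b (n-1) m) * r := by
      have hak : a * M = a * k * r + a * m := by rw [hkm]; ring
      have hc : (L + a * k - sig b (n-1) m) * r
          = (L + a * k) * r - sig b (n-1) m * r := by
        rw [Nat.sub_mul]
      have hle : sig b (n-1) m * r ≤ (L + a * k) * r :=
        Nat.mul_le_mul_right r hineq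
      rw [hxe, hak, hc]
      have hLak : (L + a*k) * r = L * r + a * k * r := by ring
      omega
    by_cases hc0 : L + a * k - sig b (n-1) m = 0
    · rw [hc0] at hx2; simpa using hx2.symm
    · exfalso
      apply hnex
      obtain ⟨c, hcv⟩ : ∃ c, L + a * k - sig b (n-1) m = c + 1 :=
        ⟨_, (Nat.succ_pred_eq_of_pos (Nat.pos_of_ne_zero hc0)).symm⟩
      refine ⟨(sig b (n-1) m * r + a * m) + c * r, ?_, ?_⟩
      · apply AddSubmonoid.add_mem
        · exact w_mem b a n hb (n-1) m (by rw [hn1]; exact hmr)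
        · have := AddSubmonoid.nsmul_mem (grep b a n) (r_mem_grep b a n) c
          simpa [nsmul_eq_mul, ← hrdef] using this
      · rw [hx2, hcv]; ring
  · rintro ⟨m, hmr, rfl⟩
    set r := repunit b n with hrdef
    constructor
    · exact w_mem b a n hb (n-1) m (by rw [hn1]; exact hmr)
    · rintro ⟨t, htS, heq⟩
      obtain ⟨L, M, hxe, hineq⟩ := mem_decomp b a n hb ha hn htS
      rw [← hrdef] at hxe hineq
      rw [hxe] at heq
      -- heq : sig m * r + a * m = L * r + a * M + r
      have heq' : a * m + sig b (n-1) m * r = a * M + (L + 1) * r := by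
        have h2 : (L + 1) * r = L * r + r := by ring
        omega
      have hMmod : M % r = m := cong_extract b a n hgcd hmr heq'
      obtain ⟨k, hk⟩ : ∃ k, M = r * k + m :=
        ⟨M / r, by conv_lhs => rw [← Nat.div_add_mod M r, hMmod]⟩
      have hMdiv : M / r = k := by rw [hk, Nat.mul_add_div hr, Nat.div_eq_of_lt hmr]; omega
      rw [hMmod, hMdiv] at hineq
      -- heq gives sig m = L + 1 + a * k
      have hsig : sig b (n-1) m * r = (L + 1 + a * k) * r := by
        have hak : a * M = a * k * r + a * m := by rw [hk]; ring
        have : (L + 1 + a * k) * r = L * r + r + a * k * r := by ring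
        omega
      have := Nat.eq_of_mul_eq_mul_right hr hsig
      omega

lemma sig_sum_blocks (b : ℕ) (hb : 1 < b) (k : ℕ) :
    ∀ c, ∑ m ∈ Finset.range (repunit b (k+1) * c), sig b (k+1) m
      = (∑ i ∈ Finset.range c, i) * repunit b (k+1)
        + c * ∑ s ∈ Finset.range (repunit b (k+1)), sig b k s := by
  set R := repunit b (k+1) with hRdef
  have hR : 0 < R := ru_pos b _ (by omega)
  intro c
  induction c with
  | zero => simp
  | succ c ih =>
    have h1 : R * (c + 1) = R * c + R := by ring
    rw [h1, Finset.sum_range_add, ih]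
    have h2 : ∀ x ∈ Finset.range R, sig b (k+1) (R * c + x) = c + sig b k x := by
      intro x hx
      exact sig_mul_add b hb (Finset.mem_range.1 hx)
    rw [Finset.sum_congr rfl h2, Finset.sum_add_distrib, Finset.sum_const, Finset.card_range,
      Finset.sum_range_succ, smul_eq_mul]
    have e1 : (∑ i ∈ Finset.range c, i + c) * R = (∑ i ∈ Finset.range c, i) * R + c * R := by
      ring
    have e2 : (c+1) * (∑ s ∈ Finset.range R, sig b k s)
        = c * (∑ s ∈ Finset.range R, sig b k s) + (∑ s ∈ Finset.range R, sig b k s) := by ring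
    have e3 : R * c = c * R := by ring
    omega

lemma sig_total (b : ℕ) (hb : 1 < b) :
    ∀ k, 2 * ∑ m ∈ Finset.range (repunit b (k+1)), sig b k m
      = ∑ j ∈ Finset.Icc 2 (k+1), (b^(k+1) + b^(k+1-(j-1))) := by
  intro k
  induction k with
  | zero =>
    rw [ru_one, Finset.Icc_eq_empty (by omega)]
    simp [sig]
  | succ k ih =>
    set R := repunit b (k+1) with hRdef
    have hR : 0 < R := ru_pos b _ (by omega)
    have hsplit : repunit b (k+1+1) = R * b + 1 := by rw [ru_succ]; ring
    rw [hsplit, Finset.sum_range_succ, sig_sum_blocks b hb k b]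
    have htop : sig b (k+1) (R * b) = b := by
      rw [show R * b = b * R by ring]; exact sig_top b hb (by omega)
    rw [htop]
    have hg : (∑ i ∈ Finset.range b, i) * 2 = b * (b - 1) := Finset.sum_range_id_mul_two b
    have hmulR : (b - 1) * R + 1 = b ^ (k+1) := ru_mul b hb (k+1)
    rw [Finset.sum_Icc_succ_top (by omega : 2 ≤ k + 1 + 1)]
    have hterm : ∀ j ∈ Finset.Icc 2 (k+1),
        (b^(k+1+1) + b^(k+1+1-(j-1))) = b * (b^(k+1) + b^(k+1-(j-1))) := by
      intro j hj
      obtain ⟨hj2, hjk⟩ := Finset.mem_Icc.1 hj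
      have e1 : k+1+1-(j-1) = (k+1-(j-1)) + 1 := by omega
      rw [e1, pow_succ, pow_succ]
      ring
    rw [Finset.sum_congr rfl hterm, ← Finset.mul_sum, ← ih]
    have hlast : b^(k+1+1-(k+1+1-1)) = b := by
      rw [show k+1+1-(k+1+1-1) = 1 by omega, pow_one]
    rw [hlast, pow_succ, ← hmulR]
    set Sk := ∑ m ∈ Finset.range R, sig b k m with hSk
    set G := ∑ i ∈ Finset.range b, i with hG
    obtain ⟨c, rfl⟩ : ∃ c, b = c + 1 := ⟨b - 1, by omega⟩
    simp only [Nat.add_sub_cancel] at hg ⊢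
    rw [← hRdef]
    have hA : 2 * (G * R) = (c+1) * c * R := by
      rw [show 2 * (G * R) = (G * 2) * R by ring, hg]
    have hC : (c * R + 1) * (c+1) = c * R * (c+1) + (c + 1) := by ring
    have hD : (c+1) * (2 * Sk) = 2 * ((c+1) * Sk) := by ring
    have hE : (c+1) * c * R = c * R * (c+1) := by ring
    omega

lemma s2_id (b : ℕ) (hb : 1 < b) :
    ∀ n, ∑ j ∈ Finset.Icc 2 n, (b^n + b^(n-(j-1))) * repunit b (j-1)
      = repunit b n * (repunit b n - 1) := by
  intro n
  induction n with
  | zero => rw [Finset.Icc_eq_empty (by omega)]; simp [ru_zero]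
  | succ n ih =>
    rcases Nat.eq_zero_or_pos n with rfl | hn1
    · rw [Finset.Icc_eq_empty (by omega)]; simp [ru_one]
    · rw [Finset.sum_Icc_succ_top (by omega : 2 ≤ n + 1)]
      have hterm : ∀ j ∈ Finset.Icc 2 n,
          (b^(n+1) + b^(n+1-(j-1))) * repunit b (j-1)
            = b * ((b^n + b^(n-(j-1))) * repunit b (j-1)) := by
        intro j hj
        obtain ⟨hj2, hjk⟩ := Finset.mem_Icc.1 hj
        have e1 : n+1-(j-1) = (n-(j-1)) + 1 := by omega
        rw [e1, pow_succ, pow_succ]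
        ring
      rw [Finset.sum_congr rfl hterm, ← Finset.mul_sum, ih]
      have hlast : n + 1 - (n + 1 - 1) = 1 := by omega
      rw [hlast, pow_one, ru_succ b n, pow_succ, ← ru_mul b hb n,
        show n + 1 - 1 = n by omega]
      have hR : 0 < repunit b n := ru_pos b _ hn1
      obtain ⟨R', hR'⟩ : ∃ R', repunit b n = R' + 1 := ⟨repunit b n - 1, by omega⟩
      rw [hR']
      obtain ⟨c, rfl⟩ : ∃ c, b = c + 1 := ⟨b - 1, by omega⟩
      simp only [Nat.add_sub_cancel, show c + 1 - 1 = c from by omega]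
      ring

lemma even_pow_add (b : ℕ) (hb : 1 < b) {s u : ℕ} (hs : 1 ≤ s) (hu : 1 ≤ u) :
    Even (b ^ s + b ^ u) := by
  rcases Nat.even_or_odd b with he | ho
  · exact (Nat.even_pow.2 ⟨he, by omega⟩).add (Nat.even_pow.2 ⟨he, by omega⟩)
  · exact (ho.pow).add_odd (ho.pow)


end Aux

/-- The sum of all elements of the Apéry set `Ap(S_a(b,i), r_b(i))` (a finite set;
`∑ᶠ` is the finite sum over it).  Each quantity `b^i + b^(i-(j-1))` is even, so the
natural-number divisions by `2` below are exact. -/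
theorem stmt_14 (b a : ℕ) (hb : 1 < b) (ha : 0 < a) :
    ∀ i, 2 ≤ i → Nat.gcd (repunit b i) a = 1 →
      ∑ᶠ ω ∈ Apery (grep b a i) (repunit b i), ω
        = ∑ j ∈ Finset.Icc 2 i, ((b ^ i + b ^ (i - (j - 1))) / 2) * aseq b a i j := by
  intro i hi hgcd
  have hn1 : i - 1 + 1 = i := by omega
  have hr : 0 < repunit b i := ru_pos b _ (by omega)
  rw [apery_eq b a i hb ha hi hgcd, finsum_mem_coe_finset]
  rw [Finset.sum_image ?hinj]
  case hinj =>
    intro m1 h1 m2 h2 heq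
    have h1 : m1 < repunit b i := by simpa using h1
    have h2 : m2 < repunit b i := by simpa using h2
    have heq' : a * m1 + sig b (i-1) m1 * repunit b i
        = a * m2 + sig b (i-1) m2 * repunit b i := by beta_reduce at heq; omega
    have := cong_extract b a i hgcd h1 heq'
    rw [Nat.mod_eq_of_lt h2] at this
    omega
  -- now a pure finite-sum identity; multiply by 2
  apply Nat.eq_of_mul_eq_mul_left (show 0 < 2 by omega)
  rw [Finset.mul_sum, Finset.mul_sum]
  -- LHS
  have hL1 : ∀ m ∈ Finset.range (repunit b i),
      2 * (sig b (i-1) m * repunit b i + a * m)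
        = sig b (i-1) m * (2 * repunit b i) + a * (m * 2) := by
    intro m _; ring
  rw [Finset.sum_congr rfl hL1]
  have e1 : ∑ m ∈ Finset.range (repunit b i),
      (sig b (i-1) m * (2 * repunit b i) + a * (m * 2))
      = (∑ m ∈ Finset.range (repunit b i), sig b (i-1) m * (2 * repunit b i))
        + ∑ m ∈ Finset.range (repunit b i), a * (m * 2) := Finset.sum_add_distrib
  have e2 : ∑ m ∈ Finset.range (repunit b i), sig b (i-1) m * (2 * repunit b i)
      = (∑ m ∈ Finset.range (repunit b i), sig b (i-1) m) * (2 * repunit b i) :=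
    (Finset.sum_mul _ _ _).symm
  have e3 : ∑ m ∈ Finset.range (repunit b i), a * (m * 2)
      = a * ∑ m ∈ Finset.range (repunit b i), m * 2 := (Finset.mul_sum _ _ _).symm
  have e4 : ∑ m ∈ Finset.range (repunit b i), m * 2
      = (∑ m ∈ Finset.range (repunit b i), m) * 2 := (Finset.sum_mul _ _ _).symm
  have e5 : (∑ m ∈ Finset.range (repunit b i), m) * 2
      = repunit b i * (repunit b i - 1) := Finset.sum_range_id_mul_two _
  have e6 : (∑ m ∈ Finset.range (repunit b i), sig b (i-1) m) * (2 * repunit b i)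
      = (2 * ∑ m ∈ Finset.range (repunit b i), sig b (i-1) m) * repunit b i := by ring
  have hst := sig_total b hb (i-1)
  rw [hn1] at hst
  rw [e1, e2, e3, e4, e5, e6, hst]
  -- RHS
  have hRHS : ∀ j ∈ Finset.Icc 2 i,
      2 * ((b ^ i + b ^ (i - (j - 1))) / 2 * aseq b a i j)
        = (b ^ i + b ^ (i - (j - 1))) * repunit b i
          + a * ((b ^ i + b ^ (i - (j - 1))) * repunit b (j-1)) := by
    intro j hj
    obtain ⟨hj2, hji⟩ := Finset.mem_Icc.1 hj
    have heven : Even (b ^ i + b ^ (i - (j - 1))) :=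
      even_pow_add b hb (by omega) (by omega)
    rw [← mul_assoc, Nat.two_mul_div_two_of_even heven]
    unfold aseq
    ring
  rw [Finset.sum_congr rfl hRHS]
  have f1 : ∑ j ∈ Finset.Icc 2 i,
      ((b ^ i + b ^ (i - (j - 1))) * repunit b i
        + a * ((b ^ i + b ^ (i - (j - 1))) * repunit b (j-1)))
      = (∑ j ∈ Finset.Icc 2 i, (b ^ i + b ^ (i - (j - 1))) * repunit b i)
        + ∑ j ∈ Finset.Icc 2 i, a * ((b ^ i + b ^ (i - (j - 1))) * repunit b (j-1)) :=
    Finset.sum_add_distrib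
  have f2 : ∑ j ∈ Finset.Icc 2 i, (b ^ i + b ^ (i - (j - 1))) * repunit b i
      = (∑ j ∈ Finset.Icc 2 i, (b ^ i + b ^ (i - (j - 1)))) * repunit b i :=
    (Finset.sum_mul _ _ _).symm
  have f3 : ∑ j ∈ Finset.Icc 2 i, a * ((b ^ i + b ^ (i - (j - 1))) * repunit b (j-1))
      = a * ∑ j ∈ Finset.Icc 2 i, (b ^ i + b ^ (i - (j - 1))) * repunit b (j-1) :=
    (Finset.mul_sum _ _ _).symm
  rw [f1, f2, f3, s2_id b hb i]
end
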